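/- Let A, B, C be points of a real inner product space with a = BC, b = CA, c = AB, and for i = 1, 2, 3 let Pᵢ be the barycenter of {A,B,C} with weights (tᵢ¹, tᵢ², tᵢ³), where Tᵢ := tᵢ¹ + tᵢ² + tᵢ³ ≠ 0. For i, j ∈ {1,2,3} set αᵢⱼ = tⱼ¹/Tⱼ − tᵢ¹/Tᵢ, βᵢⱼ = tⱼ²/Tⱼ − tᵢ²/Tᵢ, γᵢⱼ = tⱼ³/Tⱼ − tᵢ³/Tᵢ. If P₁, P₂, P₃ are pairwise distinct, then cos∠P₁P₂P₃ = [−a²(β₁₂γ₁₂ + β₂₃γ₂₃ − β₃₁γ₃₁) − b²(γ₁₂α₁₂ + γ₂₃α₂₃ − γ₃₁α₃₁) − c²(α₁₂β₁₂ + α₂₃β₂₃ − α₃₁β₃₁)] / (2·√(−β₁₂γ₁₂a² − γ₁₂α₁₂b² − α₁₂β₁₂c²)·√(−β₂₃γ₂₃a² − γ₂₃α₂₃b² − α₂₃β₂₃c²)), where ∠P₁P₂P₃ is the undirected angle at P₂ between the rays P₂P₁ and P₂P₃. -/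

import Mathlib

lemma inner_expand_aux {E : Type*} [NormedAddCommGroup E] [InnerProductSpace ℝ E]
    (u v : E) (a b c d : ℝ) :
    (inner ℝ (a • u + b • v) (c • u + d • v) : ℝ) =
      a * c * ‖u‖ ^ 2 + b * d * ‖v‖ ^ 2 + (a * d + b * c) * (inner ℝ u v : ℝ) := by
  simp only [inner_add_left, inner_add_right, real_inner_smul_left, real_inner_smul_right,
    real_inner_self_eq_norm_sq, real_inner_comm v u]
  ring

/-- formula for `cos ∠P₁P₂P₃` where `P₁, P₂, P₃` are barycenters of
`{A, B, C}` with weights `(tᵢ¹, tᵢ², tᵢ³)`, `i = 1, 2, 3`. -/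
theorem stmt_18 {E : Type*} [NormedAddCommGroup E] [InnerProductSpace ℝ E]
    (A B C P₁ P₂ P₃ : E)
    (t₁₁ t₁₂ t₁₃ t₂₁ t₂₂ t₂₃ t₃₁ t₃₂ t₃₃ : ℝ)
    (α₁₂ β₁₂ γ₁₂ α₂₃ β₂₃ γ₂₃ α₃₁ β₃₁ γ₃₁ : ℝ)
    (hT₁ : t₁₁ + t₁₂ + t₁₃ ≠ 0) (hT₂ : t₂₁ + t₂₂ + t₂₃ ≠ 0) (hT₃ : t₃₁ + t₃₂ + t₃₃ ≠ 0)
    (hP₁ : ∀ M : E, (t₁₁ + t₁₂ + t₁₃) • (P₁ - M) =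
      t₁₁ • (A - M) + t₁₂ • (B - M) + t₁₃ • (C - M))
    (hP₂ : ∀ M : E, (t₂₁ + t₂₂ + t₂₃) • (P₂ - M) =
      t₂₁ • (A - M) + t₂₂ • (B - M) + t₂₃ • (C - M))
    (hP₃ : ∀ M : E, (t₃₁ + t₃₂ + t₃₃) • (P₃ - M) =
      t₃₁ • (A - M) + t₃₂ • (B - M) + t₃₃ • (C - M))
    (hα₁₂ : α₁₂ = t₂₁ / (t₂₁ + t₂₂ + t₂₃) - t₁₁ / (t₁₁ + t₁₂ + t₁₃))
    (hβ₁₂ : β₁₂ = t₂₂ / (t₂₁ + t₂₂ + t₂₃) - t₁₂ / (t₁₁ + t₁₂ + t₁₃))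
    (hγ₁₂ : γ₁₂ = t₂₃ / (t₂₁ + t₂₂ + t₂₃) - t₁₃ / (t₁₁ + t₁₂ + t₁₃))
    (hα₂₃ : α₂₃ = t₃₁ / (t₃₁ + t₃₂ + t₃₃) - t₂₁ / (t₂₁ + t₂₂ + t₂₃))
    (hβ₂₃ : β₂₃ = t₃₂ / (t₃₁ + t₃₂ + t₃₃) - t₂₂ / (t₂₁ + t₂₂ + t₂₃))
    (hγ₂₃ : γ₂₃ = t₃₃ / (t₃₁ + t₃₂ + t₃₃) - t₂₃ / (t₂₁ + t₂₂ + t₂₃))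
    (hα₃₁ : α₃₁ = t₁₁ / (t₁₁ + t₁₂ + t₁₃) - t₃₁ / (t₃₁ + t₃₂ + t₃₃))
    (hβ₃₁ : β₃₁ = t₁₂ / (t₁₁ + t₁₂ + t₁₃) - t₃₂ / (t₃₁ + t₃₂ + t₃₃))
    (hγ₃₁ : γ₃₁ = t₁₃ / (t₁₁ + t₁₂ + t₁₃) - t₃₃ / (t₃₁ + t₃₂ + t₃₃))
    (h₁₂ : P₁ ≠ P₂) (h₂₃ : P₂ ≠ P₃) (h₁₃ : P₁ ≠ P₃) :
    Real.cos (InnerProductGeometry.angle (P₁ - P₂) (P₃ - P₂)) =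
      (-(dist B C ^ 2) * (β₁₂ * γ₁₂ + β₂₃ * γ₂₃ - β₃₁ * γ₃₁)
          - dist C A ^ 2 * (γ₁₂ * α₁₂ + γ₂₃ * α₂₃ - γ₃₁ * α₃₁)
          - dist A B ^ 2 * (α₁₂ * β₁₂ + α₂₃ * β₂₃ - α₃₁ * β₃₁)) /
        (2 * Real.sqrt (-(β₁₂ * γ₁₂ * dist B C ^ 2) - γ₁₂ * α₁₂ * dist C A ^ 2
              - α₁₂ * β₁₂ * dist A B ^ 2) *
            Real.sqrt (-(β₂₃ * γ₂₃ * dist B C ^ 2) - γ₂₃ * α₂₃ * dist C A ^ 2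
              - α₂₃ * β₂₃ * dist A B ^ 2)) := by
  set u := A - C with hu
  set v := B - C with hv
  -- barycentric coordinates of Pᵢ relative to C
  have inj₁ := smul_right_injective E hT₁
  have inj₂ := smul_right_injective E hT₂
  have inj₃ := smul_right_injective E hT₃
  have hQ₁ : P₁ - C = (t₁₁ / (t₁₁ + t₁₂ + t₁₃)) • u + (t₁₂ / (t₁₁ + t₁₂ + t₁₃)) • v := by
    apply inj₁
    dsimp only
    have e := hP₁ C
    simp only [sub_self, smul_zero, add_zero] at e
    rw [e, smul_add, smul_smul, smul_smul, mul_div_cancel₀ _ hT₁, mul_div_cancel₀ _ hT₁]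
  have hQ₂ : P₂ - C = (t₂₁ / (t₂₁ + t₂₂ + t₂₃)) • u + (t₂₂ / (t₂₁ + t₂₂ + t₂₃)) • v := by
    apply inj₂
    dsimp only
    have e := hP₂ C
    simp only [sub_self, smul_zero, add_zero] at e
    rw [e, smul_add, smul_smul, smul_smul, mul_div_cancel₀ _ hT₂, mul_div_cancel₀ _ hT₂]
  have hQ₃ : P₃ - C = (t₃₁ / (t₃₁ + t₃₂ + t₃₃)) • u + (t₃₂ / (t₃₁ + t₃₂ + t₃₃)) • v := by
    apply inj₃
    dsimp only
    have e := hP₃ C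
    simp only [sub_self, smul_zero, add_zero] at e
    rw [e, smul_add, smul_smul, smul_smul, mul_div_cancel₀ _ hT₃, mul_div_cancel₀ _ hT₃]
  have h12 : P₁ - P₂ = (-α₁₂) • u + (-β₁₂) • v := by
    have : P₁ - P₂ = (P₁ - C) - (P₂ - C) := by abel
    rw [this, hQ₁, hQ₂, hα₁₂, hβ₁₂]
    module
  have h23 : P₃ - P₂ = α₂₃ • u + β₂₃ • v := by
    have : P₃ - P₂ = (P₃ - C) - (P₂ - C) := by abel
    rw [this, hQ₃, hQ₂, hα₂₃, hβ₂₃]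
    module
  -- sums of coefficients
  have hg12 : γ₁₂ = -α₁₂ - β₁₂ := by rw [hα₁₂, hβ₁₂, hγ₁₂]; field_simp; ring
  have hg23 : γ₂₃ = -α₂₃ - β₂₃ := by rw [hα₂₃, hβ₂₃, hγ₂₃]; field_simp; ring
  have ha31 : α₃₁ = -α₁₂ - α₂₃ := by rw [hα₁₂, hα₂₃, hα₃₁]; ring
  have hb31 : β₃₁ = -β₁₂ - β₂₃ := by rw [hβ₁₂, hβ₂₃, hβ₃₁]; ring
  have hg31 : γ₃₁ = α₁₂ + β₁₂ + α₂₃ + β₂₃ := by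
    rw [hγ₃₁, hα₁₂, hβ₁₂, hα₂₃, hβ₂₃]; field_simp; ring
  -- distances
  have hBC : dist B C ^ 2 = ‖v‖ ^ 2 := by rw [dist_eq_norm]
  have hCA : dist C A ^ 2 = ‖u‖ ^ 2 := by rw [dist_eq_norm, norm_sub_rev]
  have hAB : dist A B ^ 2 = ‖u‖ ^ 2 + ‖v‖ ^ 2 - 2 * (inner ℝ u v : ℝ) := by
    have : A - B = u - v := by rw [hu, hv]; abel
    rw [dist_eq_norm, this, norm_sub_sq_real]; ring
  -- norms of the two sides
  have hn12 : ‖P₁ - P₂‖ ^ 2 =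
      α₁₂ * α₁₂ * ‖u‖ ^ 2 + β₁₂ * β₁₂ * ‖v‖ ^ 2 + (α₁₂ * β₁₂ + β₁₂ * α₁₂) * (inner ℝ u v : ℝ) := by
    rw [← real_inner_self_eq_norm_sq, h12, inner_expand_aux]; ring
  have hn23 : ‖P₃ - P₂‖ ^ 2 =
      α₂₃ * α₂₃ * ‖u‖ ^ 2 + β₂₃ * β₂₃ * ‖v‖ ^ 2 + (α₂₃ * β₂₃ + β₂₃ * α₂₃) * (inner ℝ u v : ℝ) := by
    rw [← real_inner_self_eq_norm_sq, h23, inner_expand_aux]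
  have hN12 : -(β₁₂ * γ₁₂ * dist B C ^ 2) - γ₁₂ * α₁₂ * dist C A ^ 2
      - α₁₂ * β₁₂ * dist A B ^ 2 = ‖P₁ - P₂‖ ^ 2 := by
    rw [hBC, hCA, hAB, hn12, hg12]; ring
  have hN23 : -(β₂₃ * γ₂₃ * dist B C ^ 2) - γ₂₃ * α₂₃ * dist C A ^ 2
      - α₂₃ * β₂₃ * dist A B ^ 2 = ‖P₃ - P₂‖ ^ 2 := by
    rw [hBC, hCA, hAB, hn23, hg23]; ring
  rw [InnerProductGeometry.cos_angle, hN12, hN23, Real.sqrt_sq (norm_nonneg _),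
    Real.sqrt_sq (norm_nonneg _)]
  have ha : ‖P₁ - P₂‖ ≠ 0 := by simpa using sub_ne_zero_of_ne h₁₂
  have hb : ‖P₃ - P₂‖ ≠ 0 := by simpa using sub_ne_zero_of_ne (Ne.symm h₂₃)
  have hinner : (inner ℝ (P₁ - P₂) (P₃ - P₂) : ℝ) =
      -α₁₂ * α₂₃ * ‖u‖ ^ 2 + -β₁₂ * β₂₃ * ‖v‖ ^ 2 + (-α₁₂ * β₂₃ + -β₁₂ * α₂₃) * (inner ℝ u v : ℝ) := by
    rw [h12, h23, inner_expand_aux]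
  rw [hinner, hBC, hCA, hAB, hg12, hg23, ha31, hb31, hg31]
  field_simp
  ring
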